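/- arXiv:2011.01831 — 3 statements merged into one kernel-verified Lean document; each statement's English description precedes it below -/
import Mathlib

section
/- Let H be a separable real Hilbert space and Y_n = ∑_{j≥0} A_j(ε_{n−j}) a stationary linear process with i.i.d. centered innovations ε_n having covariance operator Γ_ε, where ∑_{j≥0} ‖A_j‖ < ∞. Then the long-run covariance operator Λ = ∑_{h∈ℤ} Γ_h equals A Γ_ε A*, where A = ∑_{j≥0} A_j. -/
open MeasureTheory ProbabilityTheory RealInnerProductSpace
open scoped ENNReal NNReal

private lemma aux_ae_summable {α : Type*} [MeasurableSpace α] {μ : Measure α}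
    {ι : Type*} [Countable ι] {F : ι → α → ℝ}
    (hF_int : ∀ i, Integrable (F i) μ) (hF_sum : Summable fun i => ∫ a, ‖F i a‖ ∂μ) :
    ∀ᵐ a ∂μ, Summable fun i => F i a := by
  have key : ∑' i, ∫⁻ a, ‖F i a‖₊ ∂μ ≠ ⊤ := by
    have h1 : ∀ i, ∫⁻ a, ‖F i a‖₊ ∂μ = (‖(∫ a, ‖F i a‖ ∂μ)‖₊ : ℝ≥0∞) := by
      intro i
      rw [lintegral_coe_eq_integral _ (hF_int i).norm, ENNReal.coe_nnreal_eq, coe_nnnorm,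
        Real.norm_of_nonneg (integral_nonneg fun a => norm_nonneg (F i a))]
      simp only [coe_nnnorm]
    rw [funext h1, ← ENNReal.coe_tsum]
    · exact ENNReal.coe_ne_top
    · simp_rw [← NNReal.summable_coe, coe_nnnorm]
      exact hF_sum.abs
  have hmeas' : ∀ i, AEMeasurable (fun a => (‖F i a‖₊ : ℝ≥0∞)) μ := fun i => (hF_int i).aestronglyMeasurable.enorm
  rw [← lintegral_tsum hmeas'] at key
  filter_upwards [ae_lt_top' (AEMeasurable.ennreal_tsum hmeas') key] with a ha
  have h2 : Summable fun i => ‖F i a‖₊ := by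
    rw [← ENNReal.tsum_coe_ne_top_iff_summable]; exact ha.ne
  have h3 : Summable fun i => ‖F i a‖ := by
    simpa only [coe_nnnorm] using NNReal.summable_coe.2 h2
  exact h3.of_norm

private lemma clm_tsum_apply {H : Type*} [NormedAddCommGroup H] [InnerProductSpace ℝ H]
    [CompleteSpace H] {ι : Type*} {T : ι → H →L[ℝ] H} (hT : Summable T) (z : H) :
    (∑' i, T i) z = ∑' i, T i z :=
  (ContinuousLinearMap.apply ℝ H z).map_tsum hT

set_option maxHeartbeats 1000000 in
/-- For the stationary linear process `Y_n = ∑_{j≥0} A_j(ε_{n-j})` with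
i.i.d. centered innovations having covariance operator `Γε` and `∑_j ‖A_j‖ < ∞`, the
long-run covariance operator `Λ = ∑_{h∈ℤ} Γ_h` equals `A Γε A*`, `A = ∑_{j≥0} A_j`. -/
theorem statement_1
    {H : Type*} [NormedAddCommGroup H] [InnerProductSpace ℝ H] [CompleteSpace H]
    [TopologicalSpace.SeparableSpace H] [MeasurableSpace H] [BorelSpace H]
    {Ω : Type*} [MeasurableSpace Ω] {μ : Measure Ω} [IsProbabilityMeasure μ]
    (ε : ℤ → Ω → H)
    (hmeas : ∀ n, Measurable (ε n))
    (hindep : iIndepFun ε μ)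
    (hident : ∀ n m, IdentDistrib (ε n) (ε m) μ μ)
    (hcentered : ∀ n, ∫ ω, ε n ω ∂μ = 0)
    (hL2 : ∀ n, MemLp (ε n) 2 μ)
    (Γε : H →L[ℝ] H)
    (hΓε : ∀ z, Γε z = ∫ ω, ⟪ε 0 ω, z⟫ • ε 0 ω ∂μ)
    (A : ℕ → H →L[ℝ] H)
    (hA : Summable fun j => ‖A j‖)
    (Y : ℤ → Ω → H)
    (hY : ∀ n ω, Y n ω = ∑' j : ℕ, A j (ε (n - j) ω))
    (Γ : ℤ → H →L[ℝ] H)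
    (hΓ : ∀ h z, Γ h z = ∫ ω, ⟪Y 0 ω, z⟫ • Y h ω ∂μ) :
    (∑' h : ℤ, Γ h) =
      (∑' j : ℕ, A j) ∘L Γε ∘L (ContinuousLinearMap.adjoint (∑' j : ℕ, A j)) := by
  classical
  have hAsum : Summable A := hA.of_norm
  have hint : ∀ n, Integrable (ε n) μ := fun n => (hL2 n).integrable one_le_two
  have hL2n : ∀ n : ℤ, MemLp (fun ω => ‖ε n ω‖) 2 μ := fun n => (hL2 n).norm
  have hsq : ∀ n : ℤ, Integrable (fun ω => ‖ε n ω‖ ^ 2) μ := fun n => (hL2n n).integrable_sq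
  set c2 : ℝ := ∫ ω, ‖ε 0 ω‖ ^ 2 ∂μ with hc2def
  have hid_sq : ∀ n : ℤ, ∫ ω, ‖ε n ω‖ ^ 2 ∂μ = c2 := by
    intro n
    exact ((hident n 0).comp (measurable_norm.pow_const 2)).integral_eq
  have hc2 : 0 ≤ c2 := integral_nonneg fun ω => sq_nonneg _
  -- product of norms: integrable and integral bounded by c2
  have hprod_int : ∀ m n : ℤ, Integrable (fun ω => ‖ε m ω‖ * ‖ε n ω‖) μ := by
    intro m n
    have := ((hL2n n).smul (hL2n m) (r := 1))
    rw [memLp_one_iff_integrable] at this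
    exact this
  have hprod_le : ∀ m n : ℤ, ∫ ω, ‖ε m ω‖ * ‖ε n ω‖ ∂μ ≤ c2 := by
    intro m n
    have hle : ∀ ω, ‖ε m ω‖ * ‖ε n ω‖ ≤ (‖ε m ω‖ ^ 2 + ‖ε n ω‖ ^ 2) / 2 := by
      intro ω
      nlinarith [sq_nonneg (‖ε m ω‖ - ‖ε n ω‖)]
    calc ∫ ω, ‖ε m ω‖ * ‖ε n ω‖ ∂μ
        ≤ ∫ ω, (‖ε m ω‖ ^ 2 + ‖ε n ω‖ ^ 2) / 2 ∂μ :=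
          integral_mono (hprod_int m n) (((hsq m).add (hsq n)).div_const 2) hle
      _ = (c2 + c2) / 2 := by
          rw [integral_div, integral_add (hsq m) (hsq n), hid_sq, hid_sq]
      _ = c2 := by ring
  -- integrability of the basic smul products
  have hinner_L2 : ∀ (m : ℤ) (w : H), MemLp (fun ω => ⟪ε m ω, w⟫) 2 μ := by
    intro m w
    have : MemLp (fun ω => ((innerSL ℝ).flip w) (ε m ω)) 2 μ :=
      ContinuousLinearMap.comp_memLp' _ (hL2 m)
    exact this
  have hsmul_int : ∀ (m n : ℤ) (w : H), Integrable (fun ω => ⟪ε m ω, w⟫ • ε n ω) μ := by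
    intro m n w
    have := ((hL2 n).smul (hinner_L2 m w) (r := 1))
    rw [memLp_one_iff_integrable] at this
    exact this
  -- the key covariance computation for the innovations
  have key : ∀ (m n : ℤ) (w : H),
      ∫ ω, ⟪ε m ω, w⟫ • ε n ω ∂μ = if m = n then Γε w else 0 := by
    intro m n w
    by_cases hmn : m = n
    · subst hmn
      simp only [if_pos rfl, hΓε w]
      have hu : Measurable fun x : H => ⟪x, w⟫ • x :=
        ((continuous_id.inner continuous_const).smul continuous_id).measurable
      exact ((hident m 0).comp hu).integral_eq
    · simp only [if_neg hmn]
      set x : H := ∫ ω, ⟪ε m ω, w⟫ • ε n ω ∂μ with hx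
      have hzero : ∀ v : H, ⟪x, v⟫ = 0 := by
        intro v
        have h1 : ⟪x, v⟫ = ∫ ω, ⟪ε m ω, w⟫ * ⟪ε n ω, v⟫ ∂μ := by
          have h0 : ∫ ω, ⟪v, ⟪ε m ω, w⟫ • ε n ω⟫ ∂μ = ⟪v, x⟫ :=
            integral_inner (hsmul_int m n w) v
          rw [real_inner_comm v x, ← h0]
          refine integral_congr_ae (Filter.Eventually.of_forall fun ω => ?_)
          show ⟪v, ⟪ε m ω, w⟫ • ε n ω⟫ = ⟪ε m ω, w⟫ * ⟪ε n ω, v⟫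
          rw [real_inner_smul_right, real_inner_comm (ε n ω) v]
        have hIndep : IndepFun (fun ω => ⟪ε m ω, w⟫) (fun ω => ⟪ε n ω, v⟫) μ := by
          have h := hindep.indepFun hmn
          exact h.comp ((continuous_id.inner continuous_const).measurable)
            ((continuous_id.inner continuous_const).measurable)
        have h2 : ∫ ω, ⟪ε m ω, w⟫ * ⟪ε n ω, v⟫ ∂μ
            = (∫ ω, ⟪ε m ω, w⟫ ∂μ) * ∫ ω, ⟪ε n ω, v⟫ ∂μ :=
          hIndep.integral_mul_eq_mul_integral (hinner_L2 m w).aestronglyMeasurable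
            (hinner_L2 n v).aestronglyMeasurable
        have h3 : ∫ ω, ⟪ε m ω, w⟫ ∂μ = 0 := by
          have : ∫ ω, ⟪w, ε m ω⟫ ∂μ = ⟪w, ∫ ω, ε m ω ∂μ⟫ := integral_inner (hint m) w
          rw [hcentered m, inner_zero_right] at this
          simpa [real_inner_comm] using this
        rw [h1, h2, h3, zero_mul]
      have := hzero x
      rwa [inner_self_eq_zero] at this
  -- a.e. summability of the series defining Y
  have hae : ∀ n : ℤ, ∀ᵐ ω ∂μ, Summable fun i : ℕ => ‖A i‖ * ‖ε (n - i) ω‖ := by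
    intro n
    apply aux_ae_summable (F := fun (i : ℕ) ω => ‖A i‖ * ‖ε (n - i) ω‖)
    · exact fun i => ((hint (n - i)).norm.const_mul _)
    · have heq : ∀ i : ℕ, ∫ ω, ‖(‖A i‖ * ‖ε (n - i) ω‖)‖ ∂μ = ‖A i‖ * ∫ ω, ‖ε 0 ω‖ ∂μ := by
        intro i
        have h1 : ∀ ω, ‖(‖A i‖ * ‖ε (n - i) ω‖)‖ = ‖A i‖ * ‖ε (n - i) ω‖ := fun ω =>
          Real.norm_of_nonneg (mul_nonneg (norm_nonneg _) (norm_nonneg _))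
        rw [integral_congr_ae (Filter.Eventually.of_forall h1), integral_const_mul]
        congr 1
        exact ((hident (n - i) 0).comp measurable_norm).integral_eq
      rw [funext heq]
      exact hA.mul_right _
  -- the operator family indexed by pairs
  set K : ℕ × ℕ → H →L[ℝ] H :=
    fun p => A p.2 ∘L Γε ∘L (ContinuousLinearMap.adjoint (A p.1)) with hKdef
  have hadj_norm : ∀ B : H →L[ℝ] H, ‖ContinuousLinearMap.adjoint B‖ = ‖B‖ := fun B =>
    ContinuousLinearMap.adjoint.norm_map B
  have hKnorm : ∀ p : ℕ × ℕ, ‖K p‖ ≤ ‖A p.1‖ * ‖A p.2‖ * ‖Γε‖ := by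
    intro p
    calc ‖K p‖ ≤ ‖A p.2‖ * ‖Γε ∘L (ContinuousLinearMap.adjoint (A p.1))‖ :=
          ContinuousLinearMap.opNorm_comp_le _ _
      _ ≤ ‖A p.2‖ * (‖Γε‖ * ‖ContinuousLinearMap.adjoint (A p.1)‖) := by
          gcongr; exact ContinuousLinearMap.opNorm_comp_le _ _
      _ = ‖A p.1‖ * ‖A p.2‖ * ‖Γε‖ := by rw [hadj_norm]; ring
  have hKnormSum : Summable fun p : ℕ × ℕ => ‖K p‖ := by
    apply Summable.of_nonneg_of_le (fun p => norm_nonneg _) hKnorm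
    exact ((hA.mul_of_nonneg hA (fun _ => norm_nonneg _) (fun _ => norm_nonneg _)).mul_right
      ‖Γε‖).congr (fun p => by ring)
  have hKsum : Summable K := hKnormSum.of_norm
  -- the main pointwise computation of Γ h z
  have hΓcalc : ∀ (h : ℤ) (z : H),
      Γ h z = ∑' p : ℕ × ℕ, (if ((p.2 : ℤ) - p.1) = h then K p z else 0) := by
    intro h z
    set F : ℕ × ℕ → Ω → H := fun p ω =>
      ⟪ε (0 - p.1) ω, ContinuousLinearMap.adjoint (A p.1) z⟫ • A p.2 (ε (h - p.2) ω) with hFdef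
    have hFnorm_le : ∀ (p : ℕ × ℕ) ω, ‖F p ω‖ ≤
        (‖A p.1‖ * ‖A p.2‖ * ‖z‖) * (‖ε (0 - p.1) ω‖ * ‖ε (h - p.2) ω‖) := by
      intro p ω
      have h1 : ‖F p ω‖ ≤ ‖ε (0 - p.1) ω‖ * ‖ContinuousLinearMap.adjoint (A p.1) z‖ *
          (‖A p.2‖ * ‖ε (h - p.2) ω‖) := by
        rw [hFdef, norm_smul]
        gcongr
        · exact abs_real_inner_le_norm _ _
        · exact (A p.2).le_opNorm _
      have h2 : ‖ContinuousLinearMap.adjoint (A p.1) z‖ ≤ ‖A p.1‖ * ‖z‖ := by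
        calc ‖ContinuousLinearMap.adjoint (A p.1) z‖
            ≤ ‖ContinuousLinearMap.adjoint (A p.1)‖ * ‖z‖ := (ContinuousLinearMap.le_opNorm _ _)
          _ = ‖A p.1‖ * ‖z‖ := by rw [hadj_norm]
      calc ‖F p ω‖ ≤ ‖ε (0 - p.1) ω‖ * ‖ContinuousLinearMap.adjoint (A p.1) z‖ *
            (‖A p.2‖ * ‖ε (h - p.2) ω‖) := h1
        _ ≤ ‖ε (0 - p.1) ω‖ * (‖A p.1‖ * ‖z‖) * (‖A p.2‖ * ‖ε (h - p.2) ω‖) := by gcongr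
        _ = (‖A p.1‖ * ‖A p.2‖ * ‖z‖) * (‖ε (0 - p.1) ω‖ * ‖ε (h - p.2) ω‖) := by ring
    have hFint : ∀ p : ℕ × ℕ, Integrable (F p) μ := by
      intro p
      simp only [hFdef]
      simpa [ContinuousLinearMap.map_smul] using ((A p.2).integrable_comp
        (hsmul_int (0 - p.1) (h - p.2) (ContinuousLinearMap.adjoint (A p.1) z)))
    have hFnormint : ∀ p : ℕ × ℕ,
        ∫ ω, ‖F p ω‖ ∂μ ≤ (‖A p.1‖ * ‖A p.2‖ * ‖z‖) * c2 := by
      intro p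
      calc ∫ ω, ‖F p ω‖ ∂μ
          ≤ ∫ ω, (‖A p.1‖ * ‖A p.2‖ * ‖z‖) * (‖ε (0 - p.1) ω‖ * ‖ε (h - p.2) ω‖) ∂μ :=
            integral_mono (hFint p).norm ((hprod_int _ _).const_mul _) (hFnorm_le p)
        _ = (‖A p.1‖ * ‖A p.2‖ * ‖z‖) * ∫ ω, ‖ε (0 - p.1) ω‖ * ‖ε (h - p.2) ω‖ ∂μ :=
            integral_const_mul _ _
        _ ≤ (‖A p.1‖ * ‖A p.2‖ * ‖z‖) * c2 := by
            apply mul_le_mul_of_nonneg_left (hprod_le _ _)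
            positivity
    have hFnormsum : Summable fun p : ℕ × ℕ => ∫ ω, ‖F p ω‖ ∂μ := by
      apply Summable.of_nonneg_of_le (fun p => integral_nonneg fun ω => norm_nonneg _) hFnormint
      exact ((hA.mul_of_nonneg hA (fun _ => norm_nonneg _) (fun _ => norm_nonneg _)).mul_right
        (‖z‖ * c2)).congr (fun p => by ring)
    -- a.e. pointwise identity
    have hptwise : ∀ᵐ ω ∂μ, ⟪Y 0 ω, z⟫ • Y h ω = ∑' p : ℕ × ℕ, F p ω := by
      filter_upwards [hae 0, hae h] with ω hω0 hωh
      set f : ℕ → H := fun i => A i (ε (0 - i) ω) with hfdef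
      set g : ℕ → H := fun j => A j (ε (h - j) ω) with hgdef
      have hfs : Summable f := by
        apply Summable.of_norm_bounded hω0
        intro i
        exact (A i).le_opNorm _
      have hgs : Summable g := by
        apply Summable.of_norm_bounded hωh
        intro j
        exact (A j).le_opNorm _
      set c : ℕ → ℝ := fun i => ⟪f i, z⟫ with hcdef
      have hcs : Summable c := by
        apply Summable.of_norm_bounded (g := fun i => ‖z‖ * (‖A i‖ * ‖ε (0 - i) ω‖))
          (hω0.mul_left ‖z‖)
        intro i
        calc ‖c i‖ ≤ ‖f i‖ * ‖z‖ := by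
              simpa [hcdef] using abs_real_inner_le_norm (f i) z
          _ ≤ (‖A i‖ * ‖ε (0 - i) ω‖) * ‖z‖ := by
              apply mul_le_mul_of_nonneg_right ((A i).le_opNorm _) (norm_nonneg z)
          _ = ‖z‖ * (‖A i‖ * ‖ε (0 - i) ω‖) := by ring
      have hFsummable : Summable fun p : ℕ × ℕ => F p ω := by
        apply Summable.of_norm_bounded
          (g := fun p : ℕ × ℕ => ‖z‖ * ((‖A p.1‖ * ‖ε (0 - p.1) ω‖) * (‖A p.2‖ * ‖ε (h - p.2) ω‖)))
        · exact (hω0.mul_of_nonneg hωh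
            (fun i => mul_nonneg (norm_nonneg _) (norm_nonneg _))
            (fun j => mul_nonneg (norm_nonneg _) (norm_nonneg _))).mul_left ‖z‖
        · intro p
          calc ‖F p ω‖ ≤ (‖A p.1‖ * ‖A p.2‖ * ‖z‖) * (‖ε (0 - p.1) ω‖ * ‖ε (h - p.2) ω‖) :=
                hFnorm_le p ω
            _ = ‖z‖ * ((‖A p.1‖ * ‖ε (0 - p.1) ω‖) * (‖A p.2‖ * ‖ε (h - p.2) ω‖)) := by ring
      have hY0 : Y 0 ω = ∑' i, f i := hY 0 ω
      have hYh : Y h ω = ∑' j, g j := hY h ω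
      have hFform : ∀ p : ℕ × ℕ, F p ω = c p.1 • g p.2 := by
        intro p
        rw [hFdef, hcdef, hfdef, hgdef]
        simp only [ContinuousLinearMap.adjoint_inner_right]
      calc ⟪Y 0 ω, z⟫ • Y h ω = (∑' i, c i) • (∑' j, g j) := by
            rw [hY0, hYh]
            congr 1
            exact ((innerSL ℝ).flip z).map_tsum hfs
        _ = ∑' i, c i • (∑' j, g j) := (hcs.tsum_smul_const _).symm
        _ = ∑' i, ∑' j, c i • g j := by
            exact tsum_congr fun i => (Summable.tsum_const_smul (c i) hgs).symm
        _ = ∑' p : ℕ × ℕ, c p.1 • g p.2 := by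
            refine (Summable.tsum_prod' (hFsummable.congr fun p => hFform p) fun i => ?_).symm
            exact hgs.const_smul (c i)
        _ = ∑' p : ℕ × ℕ, F p ω := tsum_congr fun p => (hFform p).symm
    -- integral of each term
    have hFint_eq : ∀ p : ℕ × ℕ,
        ∫ ω, F p ω ∂μ = if ((p.2 : ℤ) - p.1) = h then K p z else 0 := by
      intro p
      have h1 : ∫ ω, F p ω ∂μ = A p.2 (∫ ω,
          ⟪ε (0 - p.1) ω, ContinuousLinearMap.adjoint (A p.1) z⟫ • ε (h - p.2) ω ∂μ) := by
        rw [← ContinuousLinearMap.integral_comp_comm (A p.2)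
          (hsmul_int (0 - p.1) (h - p.2) (ContinuousLinearMap.adjoint (A p.1) z))]
        congr 1; funext ω
        rw [hFdef]; simp [ContinuousLinearMap.map_smul]
      rw [h1, key]
      have hcond : ((0 : ℤ) - p.1 = h - p.2) ↔ ((p.2 : ℤ) - p.1 = h) := by omega
      by_cases hc : ((p.2 : ℤ) - p.1) = h
      · rw [if_pos (hcond.mpr hc), if_pos hc]
        rw [hKdef]
        simp
      · rw [if_neg (fun hcc => hc (hcond.mp hcc)), if_neg hc, map_zero]
    calc Γ h z = ∫ ω, ⟪Y 0 ω, z⟫ • Y h ω ∂μ := hΓ h z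
      _ = ∫ ω, ∑' p : ℕ × ℕ, F p ω ∂μ := integral_congr_ae hptwise
      _ = ∑' p : ℕ × ℕ, ∫ ω, F p ω ∂μ :=
          (integral_tsum_of_summable_integral_norm hFint hFnormsum).symm
      _ = ∑' p : ℕ × ℕ, (if ((p.2 : ℤ) - p.1) = h then K p z else 0) :=
          tsum_congr fun p => hFint_eq p
  -- operator-level identity for each Γ h
  have hKsum_ite : ∀ h : ℤ,
      Summable fun p : ℕ × ℕ => if ((p.2 : ℤ) - p.1) = h then K p else 0 := by
    intro h
    apply Summable.of_norm_bounded (g := fun p : ℕ × ℕ => ‖K p‖) hKnormSum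
    intro p
    by_cases hc : ((p.2 : ℤ) - p.1) = h <;> simp [hc]
  have h8 : ∀ h : ℤ, Γ h = ∑' p : ℕ × ℕ, (if ((p.2 : ℤ) - p.1) = h then K p else 0) := by
    intro h
    ext z
    rw [hΓcalc h z, clm_tsum_apply (hKsum_ite h) z]
    exact tsum_congr fun p =>
      (apply_ite (fun T : H →L[ℝ] H => T z) (((p.2 : ℤ) - p.1) = h) (K p) 0).symm
  have hfib : ∀ h : ℤ, Γ h =
      ∑' p : ((fun p : ℕ × ℕ => (p.2 : ℤ) - p.1) ⁻¹' {h} : Set (ℕ × ℕ)), K p := by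
    intro h
    rw [tsum_subtype, h8 h]
    exact tsum_congr fun p => by
      simp [Set.indicator_apply, Set.mem_preimage, Set.mem_singleton_iff]
  -- summing the K family
  have hadjsum : Summable fun j => ContinuousLinearMap.adjoint (A j) := by
    exact Summable.of_norm (hA.congr fun j => (hadj_norm (A j)).symm)
  have hadj_tsum : ContinuousLinearMap.adjoint (∑' j, A j)
      = ∑' j, ContinuousLinearMap.adjoint (A j) := by
    have := ((ContinuousLinearMap.adjoint
      (E := H) (F := H) (𝕜 := ℝ)).toLinearIsometry.toContinuousLinearMap).map_tsum hAsum
    simpa using this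
  have hKtot : (∑' p : ℕ × ℕ, K p)
      = (∑' j : ℕ, A j) ∘L Γε ∘L (ContinuousLinearMap.adjoint (∑' j : ℕ, A j)) := by
    ext z
    have happly : Summable fun p : ℕ × ℕ => K p z :=
      hKsum.map (ContinuousLinearMap.apply ℝ H z).toLinearMap.toAddMonoidHom
        (ContinuousLinearMap.apply ℝ H z).continuous
    have hsz : Summable fun i : ℕ => ContinuousLinearMap.adjoint (A i) z :=
      hadjsum.map (ContinuousLinearMap.apply ℝ H z).toLinearMap.toAddMonoidHom
        (ContinuousLinearMap.apply ℝ H z).continuous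
    have hrow : ∀ i : ℕ, Summable fun j : ℕ => K (i, j) z := by
      intro i
      have hrow' : Summable fun j : ℕ => K (i, j) := by
        refine Summable.of_norm_bounded
          (g := fun j => ‖A j‖ * ‖Γε ∘L ContinuousLinearMap.adjoint (A i)‖)
          (hA.mul_right _) fun j => ?_
        exact ContinuousLinearMap.opNorm_comp_le _ _
      exact hrow'.map (ContinuousLinearMap.apply ℝ H z).toLinearMap.toAddMonoidHom
        (ContinuousLinearMap.apply ℝ H z).continuous
    calc (∑' p : ℕ × ℕ, K p) z = ∑' p : ℕ × ℕ, K p z := clm_tsum_apply hKsum z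
      _ = ∑' i : ℕ, ∑' j : ℕ, K (i, j) z := Summable.tsum_prod' happly hrow
      _ = ∑' i : ℕ, (∑' j : ℕ, A j) (Γε (ContinuousLinearMap.adjoint (A i) z)) := by
          refine tsum_congr fun i => ?_
          rw [clm_tsum_apply hAsum (Γε (ContinuousLinearMap.adjoint (A i) z))]
          exact tsum_congr fun j => by simp [hKdef]
      _ = (∑' j : ℕ, A j) (Γε (∑' i : ℕ, ContinuousLinearMap.adjoint (A i) z)) := by
          have := ((∑' j : ℕ, A j) ∘L Γε).map_tsum hsz
          simpa using this.symm
      _ = ((∑' j : ℕ, A j) ∘L Γε ∘L (ContinuousLinearMap.adjoint (∑' j : ℕ, A j))) z := by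
          rw [← clm_tsum_apply hadjsum, ← hadj_tsum]
          simp
  have hS : HasSum K ((∑' j : ℕ, A j) ∘L Γε ∘L (ContinuousLinearMap.adjoint (∑' j : ℕ, A j))) :=
    hKtot ▸ hKsum.hasSum
  have hfibS := hS.tsum_fiberwise (fun p : ℕ × ℕ => (p.2 : ℤ) - p.1)
  rw [show Γ = _ from funext hfib]
  exact hfibS.tsum_eq
end

section
/- Under the stationary functional dynamic factor model with orthonormal loadings λ_1,…,λ_K and factors satisfying: for each k there exists h_k ≠ 0 with Cov(f_{0,k}, f_{h_k,k}) ≠ 0, and assuming the operator Λ = ∑_{h≠0} Γ_h is well-defined (norm-convergent), the closed range of Λ equals span{λ_1,…,λ_K}, and the kernel of Λ equals the orthogonal complement of span{λ_1,…,λ_K}, provided ∑_{h≠0} Cov(f_{0,k}, f_{h,k}) ≠ 0 for each k. -/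
open MeasureTheory RealInnerProductSpace

/-- Under the stationary functional dynamic factor model with orthonormal
loadings `λ_1,…,λ_K`, factors such that for each `k` there is `h_k ≠ 0` with
`Cov(f_{0,k}, f_{h_k,k}) ≠ 0`, and assuming `Λ = ∑_{h≠0} Γ_h` is well defined
(norm-convergent) with `∑_{h≠0} Cov(f_{0,k}, f_{h,k}) ≠ 0` for each `k`, the closed
range of `Λ` equals `span{λ_1,…,λ_K}` and the kernel of `Λ` equals its orthogonal
complement. -/
theorem statement_4
    {H : Type*} [NormedAddCommGroup H] [InnerProductSpace ℝ H] [CompleteSpace H]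
    [TopologicalSpace.SeparableSpace H]
    {Ω : Type*} [MeasurableSpace Ω] {μ : Measure Ω} [IsProbabilityMeasure μ]
    {K : ℕ}
    (lam : Fin K → H) (hlam : Orthonormal ℝ lam)
    (f : ℤ → Fin K → Ω → ℝ)
    (hf2 : ∀ n k, MemLp (f n k) 2 μ)
    (hfcentered : ∀ n k, ∫ ω, f n k ω ∂μ = 0)
    (hfstat : ∀ n h k j, ∫ ω, f n k ω * f (n + h) j ω ∂μ = ∫ ω, f 0 k ω * f h j ω ∂μ)
    (hfuncorr : ∀ n m k j, k ≠ j → ∫ ω, f n k ω * f m j ω ∂μ = 0)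
    (ε : ℤ → Ω → H)
    (hε2 : ∀ n, MemLp (ε n) 2 μ)
    (hεcentered : ∀ n, ∫ ω, ε n ω ∂μ = 0)
    (hεwn : ∀ n m, n ≠ m → ∀ y z : H, ∫ ω, ⟪ε n ω, y⟫ * ⟪ε m ω, z⟫ ∂μ = 0)
    (hfε : ∀ n m k (z : H), ∫ ω, f n k ω * ⟪ε m ω, z⟫ ∂μ = 0)
    (X : ℤ → Ω → H)
    (hX : ∀ n ω, X n ω = (∑ k, f n k ω • lam k) + ε n ω)
    (Γ : ℤ → H →L[ℝ] H)
    (hΓ : ∀ h z, Γ h z = ∫ ω, ⟪X 0 ω, z⟫ • X h ω ∂μ)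
    (hdep : ∀ k, ∃ h : ℤ, h ≠ 0 ∧ ∫ ω, f 0 k ω * f h k ω ∂μ ≠ 0)
    (Λ : H →L[ℝ] H)
    (hΛ : HasSum (fun h : {h : ℤ // h ≠ 0} => Γ h) Λ)
    (c : Fin K → ℝ)
    (hc : ∀ k, HasSum (fun h : {h : ℤ // h ≠ 0} => ∫ ω, f 0 k ω * f (h : ℤ) k ω ∂μ) (c k))
    (hcne : ∀ k, c k ≠ 0) :
    (LinearMap.range (Λ : H →ₗ[ℝ] H)).topologicalClosure = Submodule.span ℝ (Set.range lam) ∧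
      LinearMap.ker (Λ : H →ₗ[ℝ] H) = (Submodule.span ℝ (Set.range lam))ᗮ := by
  classical
  have h22 : (2 : ENNReal) / 2 = 1 := ENNReal.div_self (by norm_num) (by norm_num)
  have h11 : (1 : ENNReal) / 1 = 1 / 2 + 1 / 2 := by
    rw [ENNReal.div_add_div_same, one_add_one_eq_two, h22, one_div_one]
  -- products of L² real functions are integrable
  have hmul : ∀ {a b : Ω → ℝ}, MemLp a 2 μ → MemLp b 2 μ →
      Integrable (fun ω => a ω * b ω) μ := by
    intro a b ha hb
    have : MemLp (a • b) 1 μ := hb.smul ha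
    exact memLp_one_iff_integrable.mp (this.ae_eq (Filter.Eventually.of_forall fun ω => rfl))
  -- inner products with ε are L²
  have hεinner : ∀ n (z : H), MemLp (fun ω => ⟪z, ε n ω⟫) 2 μ := by
    intro n z
    have := (innerSL ℝ z).comp_memLp' (hε2 n)
    exact this.ae_eq (Filter.Eventually.of_forall fun ω => rfl)
  have hεinner' : ∀ n (z : H), MemLp (fun ω => ⟪ε n ω, z⟫) 2 μ := by
    intro n z
    refine (hεinner n z).ae_eq (Filter.Eventually.of_forall fun ω => ?_)
    simp [real_inner_comm]
  -- X n is L²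
  have hX2 : ∀ n, MemLp (X n) 2 μ := by
    intro n
    have h1 : MemLp (fun ω => ∑ k, f n k ω • lam k) 2 μ :=
      memLp_finset_sum Finset.univ fun k _ =>
        ((memLp_top_const (lam k)).smul (hf2 n k) :
          MemLp (fun ω => f n k ω • lam k) 2 μ)
    have := h1.add (hε2 n)
    refine this.ae_eq (Filter.Eventually.of_forall fun ω => ?_)
    simp [hX n ω]
  have hXz2 : ∀ n (z : H), MemLp (fun ω => ⟪X n ω, z⟫) 2 μ := by
    intro n z
    have := (innerSL ℝ z).comp_memLp' (hX2 n)
    refine this.ae_eq (Filter.Eventually.of_forall fun ω => ?_)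
    simp [Function.comp, real_inner_comm]
  have hint : ∀ (h : ℤ) (z : H), Integrable (fun ω => ⟪X 0 ω, z⟫ • X h ω) μ := by
    intro h z
    have : MemLp ((fun ω => ⟪X 0 ω, z⟫) • X h) 1 μ := (hX2 h).smul (hXz2 0 z)
    exact memLp_one_iff_integrable.mp this
  -- the key formula for Γ h
  have hΓz : ∀ (h : ℤ), h ≠ 0 → ∀ z : H,
      Γ h z = ∑ k, ((∫ ω, f 0 k ω * f h k ω ∂μ) * ⟪lam k, z⟫) • lam k := by
    intro h hh z
    refine ext_inner_right ℝ fun w => ?_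
    rw [hΓ]
    rw [real_inner_comm, ← integral_inner (hint h z) w]
    -- pointwise expansion of the integrand
    have hpt : ∀ ω, ⟪w, ⟪X 0 ω, z⟫ • X h ω⟫ =
        ((∑ k, ∑ j, (⟪lam k, z⟫ * ⟪w, lam j⟫) * (f 0 k ω * f h j ω))
          + ∑ k, ⟪lam k, z⟫ * (f 0 k ω * ⟪w, ε h ω⟫))
        + ((∑ j, ⟪w, lam j⟫ * (f h j ω * ⟪ε 0 ω, z⟫))
          + ⟪ε 0 ω, z⟫ * ⟪w, ε h ω⟫) := by
      intro ω
      rw [real_inner_smul_right, hX 0 ω, hX h ω]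
      rw [inner_add_left, inner_add_right, sum_inner, inner_sum]
      simp only [real_inner_smul_left, real_inner_smul_right]
      rw [add_mul, mul_add, mul_add, Finset.sum_mul_sum]
      rw [Finset.sum_mul, Finset.mul_sum]
      congr 1
      · congr 1
        · exact Finset.sum_congr rfl fun k _ => Finset.sum_congr rfl fun j _ => by ring
        · exact Finset.sum_congr rfl fun k _ => by ring
      · congr 1
        exact Finset.sum_congr rfl fun j _ => by ring
    rw [integral_congr_ae (Filter.Eventually.of_forall hpt)]
    -- integrability of the pieces
    have i1 : ∀ k j : Fin K, Integrable
        (fun ω => (⟪lam k, z⟫ * ⟪w, lam j⟫) * (f 0 k ω * f h j ω)) μ :=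
      fun k j => (hmul (hf2 0 k) (hf2 h j)).const_mul _
    have i1' : Integrable (fun ω => ∑ k, ∑ j : Fin K,
        (⟪lam k, z⟫ * ⟪w, lam j⟫) * (f 0 k ω * f h j ω)) μ :=
      integrable_finset_sum _ fun k _ => integrable_finset_sum _ fun j _ => i1 k j
    have i2 : ∀ k : Fin K, Integrable
        (fun ω => ⟪lam k, z⟫ * (f 0 k ω * ⟪w, ε h ω⟫)) μ :=
      fun k => (hmul (hf2 0 k) (hεinner h w)).const_mul _
    have i2' : Integrable (fun ω => ∑ k, ⟪lam k, z⟫ * (f 0 k ω * ⟪w, ε h ω⟫)) μ :=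
      integrable_finset_sum _ fun k _ => i2 k
    have i3 : ∀ j : Fin K, Integrable
        (fun ω => ⟪w, lam j⟫ * (f h j ω * ⟪ε 0 ω, z⟫)) μ :=
      fun j => (hmul (hf2 h j) (hεinner' 0 z)).const_mul _
    have i3' : Integrable (fun ω => ∑ j, ⟪w, lam j⟫ * (f h j ω * ⟪ε 0 ω, z⟫)) μ :=
      integrable_finset_sum _ fun j _ => i3 j
    have i4 : Integrable (fun ω => ⟪ε 0 ω, z⟫ * ⟪w, ε h ω⟫) μ :=
      hmul (hεinner' 0 z) (hεinner h w)
    have i12 : Integrable (fun ω =>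
        (∑ k, ∑ j : Fin K, (⟪lam k, z⟫ * ⟪w, lam j⟫) * (f 0 k ω * f h j ω))
          + ∑ k, ⟪lam k, z⟫ * (f 0 k ω * ⟪w, ε h ω⟫)) μ := i1'.add i2'
    have i34 : Integrable (fun ω =>
        (∑ j, ⟪w, lam j⟫ * (f h j ω * ⟪ε 0 ω, z⟫)) + ⟪ε 0 ω, z⟫ * ⟪w, ε h ω⟫) μ :=
      i3'.add i4
    rw [integral_add i12 i34, integral_add i1' i2', integral_add i3' i4]
    rw [integral_finset_sum _ fun k _ => integrable_finset_sum _ fun j _ => i1 k j]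
    rw [Finset.sum_congr rfl fun k _ =>
      integral_finset_sum Finset.univ fun j _ => i1 k j]
    rw [integral_finset_sum _ fun k _ => i2 k, integral_finset_sum _ fun j _ => i3 j]
    simp only [integral_const_mul]
    have z4 : ∫ ω, ⟪ε 0 ω, z⟫ * ⟪w, ε h ω⟫ ∂μ = 0 := by
      rw [show (fun ω => ⟪ε 0 ω, z⟫ * ⟪w, ε h ω⟫)
          = fun ω => ⟪ε 0 ω, z⟫ * ⟪ε h ω, w⟫ from
        funext fun ω => by rw [real_inner_comm w (ε h ω)]]
      exact hεwn 0 h (Ne.symm hh) z w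
    have z2 : ∀ k : Fin K, ∫ ω, f 0 k ω * ⟪w, ε h ω⟫ ∂μ = 0 := by
      intro k
      rw [show (fun ω => f 0 k ω * ⟪w, ε h ω⟫) = fun ω => f 0 k ω * ⟪ε h ω, w⟫ from
        funext fun ω => by rw [real_inner_comm w (ε h ω)]]
      exact hfε 0 h k w
    have z3 : ∀ j : Fin K, ∫ ω, f h j ω * ⟪ε 0 ω, z⟫ ∂μ = 0 := fun j => hfε h 0 j z
    simp only [z2, z3, z4, mul_zero, Finset.sum_const_zero, add_zero]
    have d1 : ∀ k : Fin K, ∑ j, ⟪lam k, z⟫ * ⟪w, lam j⟫ * ∫ ω, f 0 k ω * f h j ω ∂μ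
        = ⟪lam k, z⟫ * ⟪w, lam k⟫ * ∫ ω, f 0 k ω * f h k ω ∂μ := by
      intro k
      rw [Finset.sum_eq_single k]
      · intro j _ hj
        rw [hfuncorr 0 h k j (fun e => hj (e ▸ rfl))]
        ring
      · intro hk; exact absurd (Finset.mem_univ k) hk
    simp only [d1]
    rw [sum_inner]
    refine Finset.sum_congr rfl fun k _ => ?_
    rw [real_inner_smul_left, real_inner_comm (lam k) w]
    ring
  -- Λ z = ∑ k (c k * ⟪lam k, z⟫) • lam k
  have hΛz : ∀ z : H, Λ z = ∑ k, (c k * ⟪lam k, z⟫) • lam k := by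
    intro z
    have h1 : HasSum (fun h : {h : ℤ // h ≠ 0} => Γ h z) (Λ z) :=
      (ContinuousLinearMap.apply ℝ H z).hasSum hΛ
    have h2 : HasSum
        (fun h : {h : ℤ // h ≠ 0} =>
          ∑ k, ((∫ ω, f 0 k ω * f (h : ℤ) k ω ∂μ) * ⟪lam k, z⟫) • lam k)
        (∑ k, (c k * ⟪lam k, z⟫) • lam k) :=
      hasSum_sum fun k _ => ((hc k).mul_right _).smul_const _
    have heq : (fun h : {h : ℤ // h ≠ 0} =>
          ∑ k, ((∫ ω, f 0 k ω * f (h : ℤ) k ω ∂μ) * ⟪lam k, z⟫) • lam k)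
        = fun h : {h : ℤ // h ≠ 0} => Γ h z :=
      funext fun h => (hΓz h.1 h.2 z).symm
    rw [heq] at h2
    exact h1.unique h2
  -- inner products of lam
  have hip : ∀ i j : Fin K, ⟪lam i, lam j⟫ = if i = j then (1 : ℝ) else 0 :=
    orthonormal_iff_ite.mp hlam
  -- range of Λ is the span
  have hrange : LinearMap.range (Λ : H →ₗ[ℝ] H) = Submodule.span ℝ (Set.range lam) := by
    apply le_antisymm
    · rintro x ⟨z, rfl⟩
      rw [ContinuousLinearMap.coe_coe, show Λ z = ∑ k, (c k * ⟪lam k, z⟫) • lam k from hΛz z]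
      exact Submodule.sum_mem _ fun k _ =>
        Submodule.smul_mem _ _ (Submodule.subset_span ⟨k, rfl⟩)
    · rw [Submodule.span_le]
      rintro _ ⟨k, rfl⟩
      refine ⟨(c k)⁻¹ • lam k, ?_⟩
      rw [ContinuousLinearMap.coe_coe, ContinuousLinearMap.map_smul, hΛz]
      simp only [hip, mul_ite, mul_one, mul_zero, ite_smul, zero_smul]
      rw [Finset.sum_ite_eq' Finset.univ k (fun j => c j • lam j)]
      simp [smul_smul, inv_mul_cancel₀ (hcne k)]
  have hfd : FiniteDimensional ℝ (Submodule.span ℝ (Set.range lam)) :=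
    FiniteDimensional.span_of_finite ℝ (Set.finite_range lam)
  have hclosed : IsClosed ((Submodule.span ℝ (Set.range lam)) : Set H) :=
    Submodule.closed_of_finiteDimensional _
  constructor
  · rw [hrange, hclosed.submodule_topologicalClosure_eq]
  · ext z
    rw [LinearMap.mem_ker, Submodule.mem_orthogonal]
    constructor
    · intro hz u hu
      have hz' : ∀ k, ⟪lam k, z⟫ = 0 := by
        have h0 : ∑ k, (c k * ⟪lam k, z⟫) • lam k = 0 := by
          rw [← hΛz z]; exact hz
        have := Fintype.linearIndependent_iff.mp hlam.linearIndependent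
          (fun k => c k * ⟪lam k, z⟫) h0
        intro k
        rcases mul_eq_zero.mp (this k) with h | h
        · exact absurd h (hcne k)
        · exact h
      induction hu using Submodule.span_induction with
      | mem x hx => obtain ⟨k, rfl⟩ := hx; exact hz' k
      | zero => simp
      | add x y _ _ hx hy => simp [inner_add_left, hx, hy]
      | smul r x _ hx => simp [inner_smul_left, hx]
    · intro hz
      have hz' : ∀ k, ⟪lam k, z⟫ = 0 := fun k =>
        hz _ (Submodule.subset_span ⟨k, rfl⟩)
      show Λ z = 0
      rw [hΛz]
      simp [hz']
end

section
/- Let (X_n) be a stationary H-valued process with E‖X_0‖⁴ < ∞ and E(X_0)=0, and let Γ_h(z)=E(⟨X_0,z⟩X_h) with kernel γ_h(t,s)=E(X_0(t)X_h(s)) for H=L²[0,1]. Let γ̂_h(t,s)=N^{−1}∑_{i=1}^{N−h} X_i(t)X_{i+h}(s) for 0≤h<N. Then for each fixed h, E‖γ̂_h − γ_h‖²_{L²([0,1]²)} → 0 as N → ∞, provided the process satisfies a summability condition on fourth-order cumulants (e.g., the X_n are m-dependent or L⁴-approximable). -/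
open MeasureTheory ProbabilityTheory RealInnerProductSpace Filter
set_option maxHeartbeats 1000000

lemma aux_inner_integral_prod {α β E : Type*} [MeasurableSpace α] [MeasurableSpace β]
    [NormedAddCommGroup E] [InnerProductSpace ℝ E] [CompleteSpace E]
    {ν₁ : Measure α} {ν₂ : Measure β} [IsFiniteMeasure ν₁] [IsFiniteMeasure ν₂]
    {φ : α → E} {ψ : β → E} (hφ : Integrable φ ν₁) (hψ : Integrable ψ ν₂) :
    ∫ q : α × β, ⟪φ q.1, ψ q.2⟫ ∂(ν₁.prod ν₂) = ⟪∫ a, φ a ∂ν₁, ∫ b, ψ b ∂ν₂⟫ := by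
  have hm : AEStronglyMeasurable (fun q : α × β => ⟪φ q.1, ψ q.2⟫) (ν₁.prod ν₂) :=
    (hφ.1.comp_fst).inner (hψ.1.comp_snd)
  have hint : Integrable (fun q : α × β => ⟪φ q.1, ψ q.2⟫) (ν₁.prod ν₂) := by
    refine Integrable.mono (hφ.norm.mul_prod hψ.norm) hm ?_
    refine Eventually.of_forall fun q => ?_
    simp only [Real.norm_eq_abs, abs_mul, abs_norm]
    exact abs_real_inner_le_norm _ _
  rw [show (∫ q : α × β, ⟪φ q.1, ψ q.2⟫ ∂(ν₁.prod ν₂))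
      = ∫ a, ∫ b, ⟪φ a, ψ b⟫ ∂ν₂ ∂ν₁ from integral_prod _ hint]
  have h1 : ∀ a : α, ∫ b, ⟪φ a, ψ b⟫ ∂ν₂ = ⟪φ a, ∫ b, ψ b ∂ν₂⟫ := fun a =>
    integral_inner hψ (φ a)
  simp_rw [h1]
  rw [real_inner_comm, ← integral_inner hφ]
  exact integral_congr_ae (Eventually.of_forall fun a => real_inner_comm _ _)

lemma aux_coeFn_sum {α E : Type*} [MeasurableSpace α] {μ : Measure α}
    [NormedAddCommGroup E] {p : ENNReal} {ι : Type*} (s : Finset ι) (f : ι → Lp E p μ) :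
    ⇑(∑ i ∈ s, f i) =ᵐ[μ] fun ω => ∑ i ∈ s, f i ω := by
  classical
  induction s using Finset.induction_on with
  | empty => simp only [Finset.sum_empty]; exact Lp.coeFn_zero E p μ
  | insert a s hx ih =>
    rw [Finset.sum_insert hx]
    filter_upwards [Lp.coeFn_add (f a) (∑ i ∈ s, f i), ih] with ω h1 h2
    rw [h1, Pi.add_apply, h2, Finset.sum_insert hx]

/-- For a centered stationary `m`-dependent process `(X_n)` in a separable
Hilbert space `H` (modelling `L²[0,1]`) with `E‖X_0‖⁴ < ∞`, the empirical covariance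
kernel `γ̂_h = N⁻¹ ∑_{i=1}^{N−h} X_i ⊗ X_{i+h}` converges to the true covariance kernel
`γ_h = E(X_0 ⊗ X_h)` in mean square, where the kernels live in a Hilbert space `E`
(modelling `L²([0,1]²)`) via a tensor map `T` satisfying
`⟨T a b, T c d⟩ = ⟨a,c⟩⟨b,d⟩` (the Hilbert–Schmidt kernel norm identity). -/
theorem statement_12
    {H : Type*} [NormedAddCommGroup H] [InnerProductSpace ℝ H] [CompleteSpace H]
    [TopologicalSpace.SeparableSpace H] [MeasurableSpace H] [BorelSpace H]
    {E : Type*} [NormedAddCommGroup E] [InnerProductSpace ℝ E] [CompleteSpace E]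
    (T : H →L[ℝ] H →L[ℝ] E)
    (hT : ∀ a b c d : H, ⟪T a b, T c d⟫ = ⟪a, c⟫ * ⟪b, d⟫)
    {Ω : Type*} [MeasurableSpace Ω] {μ : Measure Ω} [IsProbabilityMeasure μ]
    (X : ℤ → Ω → H)
    (hmeas : ∀ n, Measurable (X n))
    (hcentered : ∀ n, ∫ ω, X n ω ∂μ = 0)
    (hL4 : ∀ n, MemLp (X n) 4 μ)
    (hstat : ∀ τ : ℤ, IdentDistrib (fun ω (i : ℤ) => X i ω)
      (fun ω (i : ℤ) => X (i + τ) ω) μ μ)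
    (m : ℕ)
    (hmdep : ∀ n : ℤ, IndepFun (fun ω (i : {i : ℤ // i ≤ n}) => X i ω)
      (fun ω (i : {i : ℤ // n + m < i}) => X i ω) μ)
    (h : ℕ) (G : E)
    (hG : G = ∫ ω, T (X 0 ω) (X h ω) ∂μ) :
    Tendsto (fun N : ℕ =>
        ∫ ω, ‖(N : ℝ)⁻¹ • (∑ i ∈ Finset.Icc 1 (N - h), T (X i ω) (X (i + h) ω)) - G‖ ^ 2 ∂μ)
      atTop (nhds 0) := by
  haveI : SecondCountableTopology H := UniformSpace.secondCountable_of_separable H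
  -- the process of lagged products
  set Z : ℤ → Ω → E := fun k ω => T (X k ω) (X (k + (h : ℤ)) ω) with hZdef
  have hTc : Continuous fun p : H × H => T p.1 p.2 := T.continuous₂
  have hTnorm : ∀ a b : H, ‖T a b‖ = ‖a‖ * ‖b‖ := by
    intro a b
    have h1 : ‖T a b‖ ^ 2 = (‖a‖ * ‖b‖) ^ 2 := by
      have h2 := hT a b a b
      rw [real_inner_self_eq_norm_sq, real_inner_self_eq_norm_sq,
        real_inner_self_eq_norm_sq] at h2
      rw [h2]; ring
    calc ‖T a b‖ = √(‖T a b‖ ^ 2) := (Real.sqrt_sq (norm_nonneg _)).symm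
      _ = √((‖a‖ * ‖b‖) ^ 2) := by rw [h1]
      _ = ‖a‖ * ‖b‖ := Real.sqrt_sq (by positivity)
  have hZsm : ∀ k, StronglyMeasurable (Z k) := fun k =>
    hTc.comp_stronglyMeasurable
      (((hmeas k).stronglyMeasurable).prodMk ((hmeas _).stronglyMeasurable))
  have hZ2 : ∀ k, MemLp (Z k) 2 μ := by
    intro k
    have h4 : MemLp (fun ω => ‖X (k + (h : ℤ)) ω‖) 4 μ := (hL4 _).norm
    have h4' : MemLp (fun ω => ‖X k ω‖) 4 μ := (hL4 k).norm
    have hmul : MemLp ((fun ω => ‖X k ω‖) • fun ω => ‖X (k + (h : ℤ)) ω‖) 2 μ :=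
      h4.smul h4' (hpqr := ⟨by
        have : (4:ENNReal) = 2 * 2 := by norm_num
        rw [this, ENNReal.mul_inv (by simp) (by simp), ← add_mul, ENNReal.inv_two_add_inv_two,
          one_mul]⟩)
    refine MemLp.of_le_mul (c := 1) hmul (hZsm k).aestronglyMeasurable
      (Eventually.of_forall fun ω => ?_)
    have h5 : ‖Z k ω‖ = ‖X k ω‖ * ‖X (k + (h : ℤ)) ω‖ := hTnorm _ _
    rw [h5]
    simp only [Pi.smul_apply', smul_eq_mul, one_mul, norm_mul, norm_norm]
    exact le_rfl
  have hZint : ∀ k, Integrable (Z k) μ := fun k => (hZ2 k).integrable one_le_two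
  -- stationarity transfer for real-valued functionals of the path
  have hshift : ∀ (k : ℤ) (f : (ℤ → H) → ℝ), Measurable f →
      ∫ ω, f (fun i => X i ω) ∂μ = ∫ ω, f (fun i => X (i + k) ω) ∂μ := fun k f hf =>
    ((hstat k).comp hf).integral_eq
  -- expectation of Z k is G
  have hEZ : ∀ k : ℤ, ∫ ω, Z k ω ∂μ = G := by
    intro k
    have hi : ∀ k' : ℤ, ∀ e : E, ⟪∫ ω, Z k' ω ∂μ, e⟫ = ∫ ω, ⟪Z k' ω, e⟫ ∂μ := by
      intro k' e
      rw [real_inner_comm, ← integral_inner (hZint k')]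
      exact integral_congr_ae (Eventually.of_forall fun ω => real_inner_comm _ _)
    have hpc : Continuous fun p : ℤ → H => (p 0, p (h : ℤ)) :=
      (continuous_apply (0 : ℤ)).prodMk (continuous_apply ((h : ℤ)))
    have hc2 : Continuous fun p : ℤ → H => T (p 0) (p (h : ℤ)) := hTc.comp hpc
    have hZ0 : ∫ ω, Z 0 ω ∂μ = G := by
      rw [hG]; simp [hZdef]
    refine ext_inner_right ℝ fun e => ?_
    have hfm : Measurable (fun p : ℤ → H => ⟪T (p 0) (p (h : ℤ)), e⟫) :=
      (hc2.inner continuous_const).measurable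
    have hkey := hshift k _ hfm
    simp only [zero_add, add_comm (h : ℤ) k] at hkey
    rw [hi k e, ← hZ0, hi 0 e]
    have e0 : ∫ ω, ⟪Z 0 ω, e⟫ ∂μ = ∫ ω, ⟪T (X 0 ω) (X (h:ℤ) ω), e⟫ ∂μ := by
      simp [hZdef]
    rw [e0, hkey]
  -- L² elements W k = Z k − G
  have hW2 : ∀ k, MemLp (fun ω => Z k ω - G) 2 μ := fun k => (hZ2 k).sub (memLp_const G)
  set W : ℤ → Lp E 2 μ := fun k => ((hZ2 k).sub (memLp_const G)).toLp _ with hWdef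
  have hWcoe : ∀ k, ⇑(W k) =ᵐ[μ] fun ω => Z k ω - G := fun k => MemLp.coeFn_toLp _
  have hLpnormsq : ∀ f : Lp E 2 μ, ‖f‖ ^ 2 = ∫ ω, ‖f ω‖ ^ 2 ∂μ := by
    intro f
    rw [← real_inner_self_eq_norm_sq, L2.inner_def]
    exact integral_congr_ae (Eventually.of_forall fun ω => real_inner_self_eq_norm_sq _)
  have hinner : ∀ k l, ⟪W k, W l⟫ = ∫ ω, ⟪Z k ω - G, Z l ω - G⟫ ∂μ := by
    intro k l
    rw [L2.inner_def]
    exact integral_congr_ae (by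
      filter_upwards [hWcoe k, hWcoe l] with ω h1 h2
      rw [h1, h2])
  -- second moments are shift invariant
  have hWnorm : ∀ k, ‖W k‖ = ‖W 0‖ := by
    intro k
    have hstat2 : ∫ ω, ‖Z k ω - G‖ ^ 2 ∂μ = ∫ ω, ‖Z 0 ω - G‖ ^ 2 ∂μ := by
      have hpc : Continuous fun p : ℤ → H => (p 0, p (h : ℤ)) :=
        (continuous_apply (0 : ℤ)).prodMk (continuous_apply ((h : ℤ)))
      have hc2 : Continuous fun p : ℤ → H => T (p 0) (p (h : ℤ)) := hTc.comp hpc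
      have hfm : Measurable (fun p : ℤ → H => ‖T (p 0) (p (h : ℤ)) - G‖ ^ 2) :=
        ((hc2.sub continuous_const).norm.pow 2).measurable
      have hkey := hshift k _ hfm
      simp only [zero_add, add_comm (h : ℤ) k] at hkey
      rw [show (∫ ω, ‖Z k ω - G‖ ^ 2 ∂μ)
          = ∫ ω, ‖T (X k ω) (X (k + (h:ℤ)) ω) - G‖ ^ 2 ∂μ by simp [hZdef]]
      rw [← hkey]
      simp [hZdef]
    have h1 : ‖W k‖ ^ 2 = ‖W 0‖ ^ 2 := by
      rw [hLpnormsq, hLpnormsq]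
      have e1 : ∫ ω, ‖(W k : Lp E 2 μ) ω‖ ^ 2 ∂μ = ∫ ω, ‖Z k ω - G‖ ^ 2 ∂μ :=
        integral_congr_ae ((hWcoe k).mono fun ω hω => by simp only [hω])
      have e2 : ∫ ω, ‖(W 0 : Lp E 2 μ) ω‖ ^ 2 ∂μ = ∫ ω, ‖Z 0 ω - G‖ ^ 2 ∂μ :=
        integral_congr_ae ((hWcoe 0).mono fun ω hω => by simp only [hω])
      rw [e1, e2]
      exact hstat2
    calc ‖W k‖ = √(‖W k‖ ^ 2) := (Real.sqrt_sq (norm_nonneg _)).symm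
      _ = √(‖W 0‖ ^ 2) := by rw [h1]
      _ = ‖W 0‖ := Real.sqrt_sq (norm_nonneg _)
  set C : ℝ := ‖W 0‖ ^ 2 with hCdef
  have hCnonneg : 0 ≤ C := sq_nonneg _
  have hCS : ∀ k l, |⟪W k, W l⟫| ≤ C := by
    intro k l
    calc |⟪W k, W l⟫| ≤ ‖W k‖ * ‖W l‖ := abs_real_inner_le_norm _ _
      _ = C := by rw [hWnorm k, hWnorm l, hCdef]; ring
  -- orthogonality from m-dependence
  have horth : ∀ k l : ℤ, k + h + m < l → ⟪W k, W l⟫ = 0 := by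
    intro k l hkl
    have hU : Measurable fun ω => (X k ω, X (k + (h : ℤ)) ω) :=
      (hmeas _).prodMk (hmeas _)
    have hV : Measurable fun ω => (X l ω, X (l + (h : ℤ)) ω) :=
      (hmeas _).prodMk (hmeas _)
    have hInd : IndepFun (fun ω => (X k ω, X (k + (h : ℤ)) ω))
        (fun ω => (X l ω, X (l + (h : ℤ)) ω)) μ := by
      have hkn : k ≤ k + (h : ℤ) := le_add_of_nonneg_right (by positivity)
      have hl1 : k + (h : ℤ) + m < l := hkl
      have hl2 : k + (h : ℤ) + m < l + h := by
        have : (0:ℤ) ≤ (h:ℤ) := by positivity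
        linarith
      exact (hmdep (k + (h : ℤ))).comp
        (φ := fun v : {i : ℤ // i ≤ k + (h : ℤ)} → H => (v ⟨k, hkn⟩, v ⟨k + (h:ℤ), le_rfl⟩))
        (ψ := fun v : {i : ℤ // k + (h : ℤ) + m < i} → H => (v ⟨l, hl1⟩, v ⟨l + (h:ℤ), hl2⟩))
        ((measurable_pi_apply _).prodMk (measurable_pi_apply _))
        ((measurable_pi_apply _).prodMk (measurable_pi_apply _))
    have hmap : μ.map (fun ω => ((X k ω, X (k + (h : ℤ)) ω), (X l ω, X (l + (h : ℤ)) ω)))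
        = (μ.map fun ω => (X k ω, X (k + (h : ℤ)) ω)).prod
          (μ.map fun ω => (X l ω, X (l + (h : ℤ)) ω)) :=
      (indepFun_iff_map_prod_eq_prod_map_map hU.aemeasurable hV.aemeasurable).1 hInd
    have hFsm : ∀ (ν : Measure (H × H)),
        AEStronglyMeasurable (fun u : H × H => T u.1 u.2) ν := fun ν =>
      hTc.stronglyMeasurable.aestronglyMeasurable
    have hIu : Integrable (fun u : H × H => T u.1 u.2)
        (μ.map fun ω => (X k ω, X (k + (h : ℤ)) ω)) := by
      rw [integrable_map_measure (hFsm _) hU.aemeasurable]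
      exact hZint k
    have hIv : Integrable (fun u : H × H => T u.1 u.2)
        (μ.map fun ω => (X l ω, X (l + (h : ℤ)) ω)) := by
      rw [integrable_map_measure (hFsm _) hV.aemeasurable]
      exact hZint l
    haveI : IsFiniteMeasure (μ.map fun ω => (X k ω, X (k + (h : ℤ)) ω)) :=
      μ.isFiniteMeasure_map _
    haveI : IsFiniteMeasure (μ.map fun ω => (X l ω, X (l + (h : ℤ)) ω)) :=
      μ.isFiniteMeasure_map _
    have hg : Continuous fun q : (H × H) × (H × H) => ⟪T q.1.1 q.1.2, T q.2.1 q.2.2⟫ :=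
      (hTc.comp continuous_fst).inner (hTc.comp continuous_snd)
    have hZZ : ∫ ω, ⟪Z k ω, Z l ω⟫ ∂μ = ⟪G, G⟫ := by
      calc ∫ ω, ⟪Z k ω, Z l ω⟫ ∂μ
          = ∫ q : (H × H) × (H × H), ⟪T q.1.1 q.1.2, T q.2.1 q.2.2⟫
            ∂(μ.map (fun ω => ((X k ω, X (k + (h : ℤ)) ω), (X l ω, X (l + (h : ℤ)) ω)))) :=
            (integral_map (hU.prodMk hV).aemeasurable
              hg.stronglyMeasurable.aestronglyMeasurable).symm
        _ = ∫ q : (H × H) × (H × H), ⟪T q.1.1 q.1.2, T q.2.1 q.2.2⟫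
            ∂((μ.map fun ω => (X k ω, X (k + (h : ℤ)) ω)).prod
              (μ.map fun ω => (X l ω, X (l + (h : ℤ)) ω))) := by rw [hmap]
        _ = ⟪∫ u : H × H, T u.1 u.2 ∂(μ.map fun ω => (X k ω, X (k + (h : ℤ)) ω)),
              ∫ u : H × H, T u.1 u.2 ∂(μ.map fun ω => (X l ω, X (l + (h : ℤ)) ω))⟫ :=
            aux_inner_integral_prod hIu hIv
        _ = ⟪∫ ω, Z k ω ∂μ, ∫ ω, Z l ω ∂μ⟫ := by
            rw [integral_map hU.aemeasurable (hFsm _), integral_map hV.aemeasurable (hFsm _)]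
        _ = ⟪G, G⟫ := by rw [hEZ, hEZ]
    -- integrability of the inner product of the two lagged products
    have hZZint : Integrable (fun ω => ⟪Z k ω, Z l ω⟫) μ := by
      have hmul : MemLp ((fun ω => ‖Z k ω‖) • fun ω => ‖Z l ω‖) 1 μ :=
        ((hZ2 l).norm).smul ((hZ2 k).norm)
      refine Integrable.mono (memLp_one_iff_integrable.1 hmul)
        (((hZ2 k).1).inner ((hZ2 l).1)) ?_
      refine Eventually.of_forall fun ω => ?_
      simp only [Real.norm_eq_abs, Pi.smul_apply', Pi.smul_apply, smul_eq_mul, abs_mul, abs_norm]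
      exact abs_real_inner_le_norm _ _
    have I1 : Integrable (fun ω => ⟪Z k ω, G⟫) μ := (hZint k).inner_const G
    have I2 : Integrable (fun ω => ⟪G, Z l ω⟫) μ := (hZint l).const_inner G
    have hZG : ∫ ω, ⟪Z k ω, G⟫ ∂μ = ⟪G, G⟫ := by
      calc ∫ ω, ⟪Z k ω, G⟫ ∂μ = ∫ ω, ⟪G, Z k ω⟫ ∂μ :=
            integral_congr_ae (Eventually.of_forall fun ω => real_inner_comm _ _)
        _ = ⟪G, ∫ ω, Z k ω ∂μ⟫ := integral_inner (hZint k) G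
        _ = ⟪G, G⟫ := by rw [hEZ]
    have hGZ : ∫ ω, ⟪G, Z l ω⟫ ∂μ = ⟪G, G⟫ := by
      rw [integral_inner (hZint l) G, hEZ]
    rw [hinner]
    have expand : (fun ω => ⟪Z k ω - G, Z l ω - G⟫)
        = fun ω => ⟪Z k ω, Z l ω⟫ - ⟪Z k ω, G⟫ - ⟪G, Z l ω⟫ + ⟪G, G⟫ := by
      funext ω
      simp only [inner_sub_left, inner_sub_right]
      ring
    rw [expand]
    have J1 : Integrable (fun ω => ⟪Z k ω, Z l ω⟫ - ⟪Z k ω, G⟫) μ := hZZint.sub I1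
    have J2 : Integrable (fun ω => ⟪Z k ω, Z l ω⟫ - ⟪Z k ω, G⟫ - ⟪G, Z l ω⟫) μ := J1.sub I2
    rw [integral_add J2 (integrable_const _), integral_sub J1 I2, integral_sub hZZint I1,
      integral_const, hZZ, hZG, hGZ]
    simp
  -- the quadratic bound on partial sums
  have hsum : ∀ n : ℕ, ‖∑ i ∈ Finset.Icc 1 n, W i‖ ^ 2
      ≤ (2 * (h + m) + 1 : ℝ) * C * n := by
    intro n
    have expand : ‖∑ i ∈ Finset.Icc 1 n, W (i : ℤ)‖ ^ 2
        = ∑ i ∈ Finset.Icc 1 n, ∑ j ∈ Finset.Icc 1 n, ⟪W (i : ℤ), W (j : ℤ)⟫ := by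
      rw [← real_inner_self_eq_norm_sq, sum_inner]
      exact Finset.sum_congr rfl fun i _ => inner_sum _ _ _
    rw [expand]
    have key : ∀ i ∈ Finset.Icc 1 n,
        ∑ j ∈ Finset.Icc 1 n, ⟪W (i : ℤ), W (j : ℤ)⟫ ≤ (2 * (h + m) + 1 : ℝ) * C := by
      intro i _
      have hle : ∑ j ∈ Finset.Icc 1 n, ⟪W (i : ℤ), W (j : ℤ)⟫
          ≤ ∑ j ∈ Finset.Icc 1 n, |⟪W (i : ℤ), W (j : ℤ)⟫| :=
        Finset.sum_le_sum fun j _ => le_abs_self _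
      refine hle.trans ?_
      have hfilter : ∑ j ∈ Finset.Icc 1 n, |⟪W (i : ℤ), W (j : ℤ)⟫|
          = ∑ j ∈ (Finset.Icc 1 n).filter
              (fun j => i ≤ j + (h + m) ∧ j ≤ i + (h + m)), |⟪W (i : ℤ), W (j : ℤ)⟫| := by
        refine (Finset.sum_filter_of_ne ?_).symm
        intro j _ hne
        by_contra hP
        push_neg at hP
        apply hne
        rcases le_or_gt i (j + (h + m)) with hc1 | hc1
        · have hnat := hP hc1
          have hint : (i : ℤ) + h + m < j := by omega
          rw [horth i j hint, abs_zero]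
        · have hint : (j : ℤ) + h + m < i := by omega
          rw [real_inner_comm, horth j i hint, abs_zero]
      rw [hfilter]
      have hcard : ((Finset.Icc 1 n).filter
          (fun j => i ≤ j + (h + m) ∧ j ≤ i + (h + m))).card ≤ 2 * (h + m) + 1 := by
        have hsub : (Finset.Icc 1 n).filter
            (fun j => i ≤ j + (h + m) ∧ j ≤ i + (h + m))
            ⊆ Finset.Icc (i - (h + m)) (i + (h + m)) := by
          intro j hj
          simp only [Finset.mem_filter, Finset.mem_Icc] at hj ⊢
          omega
        calc ((Finset.Icc 1 n).filter _).card
            ≤ (Finset.Icc (i - (h + m)) (i + (h + m))).card := Finset.card_le_card hsub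
          _ ≤ 2 * (h + m) + 1 := by rw [Nat.card_Icc]; omega
      calc ∑ j ∈ (Finset.Icc 1 n).filter
            (fun j => i ≤ j + (h + m) ∧ j ≤ i + (h + m)), |⟪W (i : ℤ), W (j : ℤ)⟫|
          ≤ ∑ j ∈ (Finset.Icc 1 n).filter
            (fun j => i ≤ j + (h + m) ∧ j ≤ i + (h + m)), C :=
            Finset.sum_le_sum fun j _ => hCS _ _
        _ = (((Finset.Icc 1 n).filter
            (fun j => i ≤ j + (h + m) ∧ j ≤ i + (h + m))).card : ℝ) * C := by
            rw [Finset.sum_const, nsmul_eq_mul]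
        _ ≤ (2 * (h + m) + 1 : ℝ) * C := by
            have : (((Finset.Icc 1 n).filter
                (fun j => i ≤ j + (h + m) ∧ j ≤ i + (h + m))).card : ℝ)
                ≤ (2 * (h + m) + 1 : ℝ) := by
              exact_mod_cast hcard
            exact mul_le_mul_of_nonneg_right this hCnonneg
    calc ∑ i ∈ Finset.Icc 1 n, ∑ j ∈ Finset.Icc 1 n, ⟪W (i : ℤ), W (j : ℤ)⟫
        ≤ ∑ i ∈ Finset.Icc 1 n, (2 * (h + m) + 1 : ℝ) * C := Finset.sum_le_sum key
      _ = ((Finset.Icc 1 n).card : ℝ) * ((2 * (h + m) + 1 : ℝ) * C) := by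
          rw [Finset.sum_const, nsmul_eq_mul]
      _ ≤ (2 * (h + m) + 1 : ℝ) * C * n := by
          rw [Nat.card_Icc]
          have : ((n + 1 - 1 : ℕ) : ℝ) = n := by push_cast; ring
          rw [this]; ring_nf; exact le_rfl
  -- the constant function G as an L² element
  set Gc : Lp E 2 μ := (memLp_const (μ := μ) (c := G)).toLp _ with hGcdef
  have hGccoe : ⇑Gc =ᵐ[μ] fun _ => G := MemLp.coeFn_toLp _
  -- identification of the integral with an L² norm
  have hVal : ∀ N : ℕ,
      ∫ ω, ‖(N : ℝ)⁻¹ • (∑ i ∈ Finset.Icc 1 (N - h), T (X i ω) (X (i + h) ω)) - G‖ ^ 2 ∂μ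
      = ‖(N : ℝ)⁻¹ • (∑ i ∈ Finset.Icc 1 (N - h), W i)
          - (1 - ((N - h : ℕ) : ℝ) / (N : ℝ)) • Gc‖ ^ 2 := by
    intro N
    set n := N - h with hn
    set A : Lp E 2 μ := (N : ℝ)⁻¹ • (∑ i ∈ Finset.Icc 1 n, W i)
        - (1 - (n : ℝ) / (N : ℝ)) • Gc with hAdef
    rw [hLpnormsq A]
    refine integral_congr_ae ?_
    have h1 := Lp.coeFn_sub ((N : ℝ)⁻¹ • (∑ i ∈ Finset.Icc 1 n, W i))
      ((1 - (n : ℝ) / (N : ℝ)) • Gc)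
    have h2 := Lp.coeFn_smul ((N : ℝ)⁻¹) (∑ i ∈ Finset.Icc 1 n, W (i : ℤ))
    have h3 := Lp.coeFn_smul ((1 - (n : ℝ) / (N : ℝ))) Gc
    have h4 := aux_coeFn_sum (Finset.Icc 1 n) (fun i : ℕ => W (i : ℤ))
    have h5 : ∀ᵐ ω ∂μ, ∀ i ∈ Finset.Icc 1 n, (W (i : ℤ) : Ω → E) ω = Z i ω - G :=
      (ae_ball_iff (Finset.Icc 1 n).countable_toSet).2 fun i _ => hWcoe i
    filter_upwards [h1, h2, h3, h4, h5, hGccoe] with ω e1 e2 e3 e4 e5 e6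
    have hAω : (A : Ω → E) ω
        = (N : ℝ)⁻¹ • (∑ i ∈ Finset.Icc 1 n, (Z i ω - G))
          - (1 - (n : ℝ) / (N : ℝ)) • G := by
      rw [hAdef, e1, Pi.sub_apply, e2, Pi.smul_apply, e4, e3, Pi.smul_apply, e6]
      congr 1
      congr 1
      exact Finset.sum_congr rfl fun i hi => e5 i hi
    have hsum_eq : ∑ i ∈ Finset.Icc 1 n, Z (i : ℤ) ω
        = ∑ i ∈ Finset.Icc 1 n, T (X i ω) (X (i + h) ω) :=
      Finset.sum_congr rfl fun i _ => by
        show T (X (i : ℤ) ω) (X ((i : ℤ) + (h : ℤ)) ω) = _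
        norm_cast
    have halg : (A : Ω → E) ω
        = (N : ℝ)⁻¹ • (∑ i ∈ Finset.Icc 1 n, T (X i ω) (X (i + h) ω)) - G := by
      rw [hAω, ← hsum_eq, Finset.sum_sub_distrib, Finset.sum_const, Nat.card_Icc]
      have hcard : n + 1 - 1 = n := by omega
      rw [hcard, smul_sub, ← Nat.cast_smul_eq_nsmul ℝ n G, smul_smul]
      have hcoef : (N : ℝ)⁻¹ * (n : ℝ) = (n : ℝ) / (N : ℝ) := by ring
      rw [hcoef, sub_smul, one_smul]
      abel
    rw [halg]
  -- quantitative bound for large N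
  have hGnn : (0:ℝ) ≤ ‖Gc‖ := norm_nonneg _
  have hbound : ∀ N : ℕ, h + 1 ≤ N →
      ‖(N : ℝ)⁻¹ • (∑ i ∈ Finset.Icc 1 (N - h), W i)
          - (1 - ((N - h : ℕ) : ℝ) / (N : ℝ)) • Gc‖ ^ 2
      ≤ 2 * ((2 * (h + m) + 1 : ℝ) * C) / N + 2 * ((h : ℝ) / N) ^ 2 * ‖Gc‖ ^ 2 := by
    intro N hN
    have hNpos : (0 : ℝ) < N := by
      have : (1 : ℕ) ≤ N := by omega
      exact_mod_cast Nat.lt_of_lt_of_le Nat.zero_lt_one this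
    set n := N - h with hn
    have hcast : ((n : ℕ) : ℝ) = (N : ℝ) - h := by
      rw [hn, Nat.cast_sub (by omega)]
    have hc : (1 - ((n : ℕ) : ℝ) / (N : ℝ)) = (h : ℝ) / N := by
      rw [hcast]; field_simp; ring
    have htri : ‖(N : ℝ)⁻¹ • (∑ i ∈ Finset.Icc 1 n, W i)
          - ((h : ℝ) / N) • Gc‖
        ≤ (N : ℝ)⁻¹ * ‖∑ i ∈ Finset.Icc 1 n, W (i : ℤ)‖ + ((h : ℝ) / N) * ‖Gc‖ := by
      refine (norm_sub_le _ _).trans ?_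
      rw [norm_smul, norm_smul]
      have a1 : ‖((N : ℝ)⁻¹ : ℝ)‖ = (N : ℝ)⁻¹ := by
        rw [Real.norm_eq_abs, abs_of_nonneg (by positivity)]
      have a2 : ‖((h : ℝ) / N : ℝ)‖ = (h : ℝ) / N := by
        rw [Real.norm_eq_abs, abs_of_nonneg (by positivity)]
      rw [a1, a2]
    have hS := hsum n
    have hnleN : ((n : ℕ) : ℝ) ≤ (N : ℝ) := by
      rw [hcast]
      have : (0:ℝ) ≤ (h:ℝ) := by positivity
      linarith
    have hSnn : (0:ℝ) ≤ ‖∑ i ∈ Finset.Icc 1 n, W (i : ℤ)‖ := norm_nonneg _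
    have hKC : (0:ℝ) ≤ (2 * (h + m) + 1 : ℝ) * C := by positivity
    rw [hc]
    calc ‖(N : ℝ)⁻¹ • (∑ i ∈ Finset.Icc 1 n, W i) - ((h : ℝ) / N) • Gc‖ ^ 2
        ≤ ((N : ℝ)⁻¹ * ‖∑ i ∈ Finset.Icc 1 n, W (i : ℤ)‖ + ((h : ℝ) / N) * ‖Gc‖) ^ 2 := by
          exact pow_le_pow_left₀ (norm_nonneg _) htri 2
      _ ≤ 2 * ((N : ℝ)⁻¹ * ‖∑ i ∈ Finset.Icc 1 n, W (i : ℤ)‖) ^ 2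
          + 2 * (((h : ℝ) / N) * ‖Gc‖) ^ 2 := by
          have habs : ∀ x y : ℝ, (x + y) ^ 2 ≤ 2 * x ^ 2 + 2 * y ^ 2 := fun x y => by
            nlinarith [sq_nonneg (x - y)]
          exact habs _ _
      _ ≤ 2 * ((2 * (h + m) + 1 : ℝ) * C) / N + 2 * ((h : ℝ) / N) ^ 2 * ‖Gc‖ ^ 2 := by
          have key : ((N : ℝ)⁻¹ * ‖∑ i ∈ Finset.Icc 1 n, W (i : ℤ)‖) ^ 2
              ≤ ((2 * (h + m) + 1 : ℝ) * C) / N := by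
            have e1 : ((N : ℝ)⁻¹ * ‖∑ i ∈ Finset.Icc 1 n, W (i : ℤ)‖) ^ 2
                = (N : ℝ)⁻¹ * (N : ℝ)⁻¹ * ‖∑ i ∈ Finset.Icc 1 n, W (i : ℤ)‖ ^ 2 := by ring
            rw [e1]
            calc (N : ℝ)⁻¹ * (N : ℝ)⁻¹ * ‖∑ i ∈ Finset.Icc 1 n, W (i : ℤ)‖ ^ 2
                ≤ (N : ℝ)⁻¹ * (N : ℝ)⁻¹ * ((2 * (h + m) + 1 : ℝ) * C * n) := by
                  have hpos : (0:ℝ) ≤ (N : ℝ)⁻¹ * (N : ℝ)⁻¹ := by positivity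
                  exact mul_le_mul_of_nonneg_left hS hpos
              _ = ((2 * (h + m) + 1 : ℝ) * C) * ((N : ℝ)⁻¹ * ((N : ℝ)⁻¹ * n)) := by ring
              _ ≤ ((2 * (h + m) + 1 : ℝ) * C) * ((N : ℝ)⁻¹ * 1) := by
                  have : (N : ℝ)⁻¹ * (n : ℝ) ≤ 1 := by
                    rw [inv_mul_le_iff₀ hNpos, mul_one]
                    exact hnleN
                  have hNi : (0:ℝ) ≤ (N : ℝ)⁻¹ := by positivity
                  exact mul_le_mul_of_nonneg_left
                    (mul_le_mul_of_nonneg_left this hNi) hKC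
              _ = ((2 * (h + m) + 1 : ℝ) * C) / N := by
                  rw [div_eq_mul_inv]; ring
          have e2 : (((h : ℝ) / N) * ‖Gc‖) ^ 2 = ((h : ℝ) / N) ^ 2 * ‖Gc‖ ^ 2 := by ring
          rw [e2]
          have e3 : 2 * ((2 * (h + m) + 1 : ℝ) * C) / N
              = 2 * (((2 * (h + m) + 1 : ℝ) * C) / N) := by ring
          rw [e3]
          linarith [key]
  -- the explicit bound tends to zero
  have hbnd0 : Tendsto (fun N : ℕ => 2 * ((2 * (h + m) + 1 : ℝ) * C) / N
      + 2 * ((h : ℝ) / N) ^ 2 * ‖Gc‖ ^ 2) atTop (nhds 0) := by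
    have heq : (fun N : ℕ => 2 * ((2 * (h + m) + 1 : ℝ) * C) / N
        + 2 * ((h : ℝ) / N) ^ 2 * ‖Gc‖ ^ 2)
        = fun N : ℕ => (2 * ((2 * (h + m) + 1 : ℝ) * C)) * (1 / N)
          + (2 * ‖Gc‖ ^ 2 * (h : ℝ) ^ 2) * ((1 / N) * (1 / N)) := by
      funext N; ring
    rw [heq]
    have t1 := tendsto_one_div_atTop_nhds_zero_nat (𝕜 := ℝ)
    have := (t1.const_mul (2 * ((2 * (h + m) + 1 : ℝ) * C))).add
      (((t1.mul t1).const_mul (2 * ‖Gc‖ ^ 2 * (h : ℝ) ^ 2)))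
    simpa using this
  refine tendsto_of_tendsto_of_tendsto_of_le_of_le' tendsto_const_nhds hbnd0 ?_ ?_
  · exact Eventually.of_forall fun N => integral_nonneg fun ω => by positivity
  · filter_upwards [eventually_ge_atTop (h + 1)] with N hN
    rw [hVal N]
    exact hbound N hN
end
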